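/- Let 1 ≤ n < d, 0 < s < 1, and let L := {x ∈ ℝ^d \ {0} : |x_V| ≤ s|x_H|} be the cone of slope s about the horizontal n-plane. Then the map Υ(x) := (|x|/|x_H|) x_H + x_V is a bilipschitz homeomorphism from L onto the cone L' := {x ∈ ℝ^d \ {0} : |x_V| ≤ s(1+s^2)^{-1/2} |x_H|}, with inverse Υ^{-1}(x) = (1 − |x_V|^2/|x_H|^2)^{1/2} x_H + x_V, and the Lipschitz constants of Υ and Υ^{-1} depend only on n, d, and s. -/

import Mathlib

/-- Projection of `x ∈ ℝ^d` onto the first `n` coordinates (viewed inside `ℝ^d`). -/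
noncomputable def horiz (n d : ℕ) (x : EuclideanSpace ℝ (Fin d)) : EuclideanSpace ℝ (Fin d) :=
  (WithLp.equiv 2 (Fin d → ℝ)).symm (fun i => if (i : ℕ) < n then x i else 0)

/-- Projection of `x ∈ ℝ^d` onto the last `d - n` coordinates (viewed inside `ℝ^d`). -/
noncomputable def vert (n d : ℕ) (x : EuclideanSpace ℝ (Fin d)) : EuclideanSpace ℝ (Fin d) :=
  (WithLp.equiv 2 (Fin d → ℝ)).symm (fun i => if (i : ℕ) < n then 0 else x i)

/-- The map `Υ(x) := (|x|/|x_H|)·x_H + x_V`. -/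
noncomputable def ups (n d : ℕ) (x : EuclideanSpace ℝ (Fin d)) : EuclideanSpace ℝ (Fin d) :=
  (‖x‖ / ‖horiz n d x‖) • horiz n d x + vert n d x

/-- The map `Υ⁻¹(x) := (1 − |x_V|²/|x_H|²)^{1/2}·x_H + x_V`. -/
noncomputable def upsInv (n d : ℕ) (x : EuclideanSpace ℝ (Fin d)) : EuclideanSpace ℝ (Fin d) :=
  Real.sqrt (1 - ‖vert n d x‖ ^ 2 / ‖horiz n d x‖ ^ 2) • horiz n d x + vert n d x

open scoped RealInnerProductSpace

variable {n d : ℕ}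

lemma horiz_apply (x : EuclideanSpace ℝ (Fin d)) (i : Fin d) :
    horiz n d x i = if (i : ℕ) < n then x i else 0 := rfl

lemma vert_apply (x : EuclideanSpace ℝ (Fin d)) (i : Fin d) :
    vert n d x i = if (i : ℕ) < n then 0 else x i := rfl

lemma horiz_add_vert (x : EuclideanSpace ℝ (Fin d)) : horiz n d x + vert n d x = x := by
  ext i
  simp [horiz_apply, vert_apply, PiLp.add_apply]
  split <;> simp [starRingEnd_apply]

lemma horiz_sub (x y : EuclideanSpace ℝ (Fin d)) :
    horiz n d (x - y) = horiz n d x - horiz n d y := by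
  ext i
  simp [horiz_apply, PiLp.sub_apply]
  split <;> simp [starRingEnd_apply]

lemma vert_sub (x y : EuclideanSpace ℝ (Fin d)) :
    vert n d (x - y) = vert n d x - vert n d y := by
  ext i
  simp [vert_apply, PiLp.sub_apply]
  split <;> simp [starRingEnd_apply]

lemma horiz_smul (c : ℝ) (x : EuclideanSpace ℝ (Fin d)) :
    horiz n d (c • x) = c • horiz n d x := by
  ext i
  simp [horiz_apply, PiLp.smul_apply]

lemma vert_smul (c : ℝ) (x : EuclideanSpace ℝ (Fin d)) :
    vert n d (c • x) = c • vert n d x := by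
  ext i
  simp [vert_apply, PiLp.smul_apply]

lemma horiz_add (x y : EuclideanSpace ℝ (Fin d)) :
    horiz n d (x + y) = horiz n d x + horiz n d y := by
  ext i
  simp [horiz_apply, PiLp.add_apply]
  split <;> simp [starRingEnd_apply]

lemma vert_add (x y : EuclideanSpace ℝ (Fin d)) :
    vert n d (x + y) = vert n d x + vert n d y := by
  ext i
  simp [vert_apply, PiLp.add_apply]
  split <;> simp [starRingEnd_apply]

lemma horiz_horiz (x : EuclideanSpace ℝ (Fin d)) : horiz n d (horiz n d x) = horiz n d x := by
  ext i; simp only [horiz_apply]; split <;> simp_all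

lemma horiz_vert (x : EuclideanSpace ℝ (Fin d)) : horiz n d (vert n d x) = 0 := by
  ext i; simp only [horiz_apply, vert_apply]; split <;> simp_all

lemma vert_horiz (x : EuclideanSpace ℝ (Fin d)) : vert n d (horiz n d x) = 0 := by
  ext i; simp only [horiz_apply, vert_apply]; split <;> simp_all

lemma vert_vert (x : EuclideanSpace ℝ (Fin d)) : vert n d (vert n d x) = vert n d x := by
  ext i; simp only [vert_apply]; split <;> simp_all

lemma inner_horiz_vert (x y : EuclideanSpace ℝ (Fin d)) :
    ⟪horiz n d x, vert n d y⟫ = 0 := by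
  rw [PiLp.inner_apply]
  apply Finset.sum_eq_zero
  intro i _
  simp only [horiz_apply, vert_apply, RCLike.inner_apply]
  split <;> simp [starRingEnd_apply]

lemma norm_sq_split (x : EuclideanSpace ℝ (Fin d)) :
    ‖x‖ ^ 2 = ‖horiz n d x‖ ^ 2 + ‖vert n d x‖ ^ 2 := by
  conv_lhs => rw [← horiz_add_vert (n := n) x]
  rw [← real_inner_self_eq_norm_sq, ← real_inner_self_eq_norm_sq, ← real_inner_self_eq_norm_sq]
  rw [inner_add_add_self, inner_horiz_vert]
  have : ⟪vert n d x, horiz n d x⟫ = 0 := by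
    rw [real_inner_comm, inner_horiz_vert]
  rw [this]
  ring

lemma norm_horiz_le (x : EuclideanSpace ℝ (Fin d)) : ‖horiz n d x‖ ≤ ‖x‖ := by
  have h := norm_sq_split (n := n) x
  nlinarith [norm_nonneg (horiz n d x), norm_nonneg x, sq_nonneg (‖vert n d x‖)]

lemma norm_vert_le (x : EuclideanSpace ℝ (Fin d)) : ‖vert n d x‖ ≤ ‖x‖ := by
  have h := norm_sq_split (n := n) x
  nlinarith [norm_nonneg (vert n d x), norm_nonneg x]

lemma le_of_sq_le_sq' {a b : ℝ} (ha : 0 ≤ a) (hb : 0 ≤ b) (h : a ^ 2 ≤ b ^ 2) : a ≤ b := by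
  nlinarith

lemma rpow_half_eq (s : ℝ) : (1 + s ^ 2 : ℝ) ^ (-(1 : ℝ) / 2) = (Real.sqrt (1 + s ^ 2))⁻¹ := by
  rw [Real.sqrt_eq_rpow, ← Real.rpow_neg (by positivity)]
  norm_num

lemma horiz_zero : horiz n d (0 : EuclideanSpace ℝ (Fin d)) = 0 := by
  ext i; simp [horiz_apply]

lemma ne_zero_of_horiz_ne {x : EuclideanSpace ℝ (Fin d)} (h : horiz n d x ≠ 0) : x ≠ 0 := by
  intro hx; rw [hx, horiz_zero] at h; exact h rfl

lemma horiz_pos {c : ℝ} {x : EuclideanSpace ℝ (Fin d)} (hx : x ≠ 0)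
    (hxs : ‖vert n d x‖ ≤ c * ‖horiz n d x‖) : 0 < ‖horiz n d x‖ := by
  rcases (norm_nonneg (horiz n d x)).lt_or_eq with h | h
  · exact h
  · exfalso
    have hh0 : horiz n d x = 0 := by
      rwa [eq_comm, norm_eq_zero] at h
    have hv0 : vert n d x = 0 := by
      have h2 : ‖vert n d x‖ ≤ 0 := by
        have := hxs
        rw [← h, mul_zero] at this
        exact this
      exact norm_eq_zero.mp (le_antisymm h2 (norm_nonneg _))
    exact hx (by rw [← horiz_add_vert (n := n) x, hh0, hv0, add_zero])

lemma horiz_ups (x : EuclideanSpace ℝ (Fin d)) :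
    horiz n d (ups n d x) = (‖x‖ / ‖horiz n d x‖) • horiz n d x := by
  rw [ups, horiz_add, horiz_smul, horiz_horiz, horiz_vert, add_zero]

lemma vert_ups (x : EuclideanSpace ℝ (Fin d)) : vert n d (ups n d x) = vert n d x := by
  rw [ups, vert_add, vert_smul, vert_horiz, vert_vert, smul_zero, zero_add]

lemma horiz_upsInv (x : EuclideanSpace ℝ (Fin d)) :
    horiz n d (upsInv n d x) =
      Real.sqrt (1 - ‖vert n d x‖ ^ 2 / ‖horiz n d x‖ ^ 2) • horiz n d x := by
  rw [upsInv, horiz_add, horiz_smul, horiz_horiz, horiz_vert, add_zero]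

lemma vert_upsInv (x : EuclideanSpace ℝ (Fin d)) : vert n d (upsInv n d x) = vert n d x := by
  rw [upsInv, vert_add, vert_smul, vert_horiz, vert_vert, smul_zero, zero_add]

lemma norm_horiz_ups {x : EuclideanSpace ℝ (Fin d)} (hH : 0 < ‖horiz n d x‖) :
    ‖horiz n d (ups n d x)‖ = ‖x‖ := by
  rw [horiz_ups, norm_smul, Real.norm_eq_abs, abs_div, abs_norm, abs_norm,
    div_mul_cancel₀ _ hH.ne']

lemma memL' {s : ℝ} (hs0 : 0 < s) {x : EuclideanSpace ℝ (Fin d)} (hx : x ≠ 0)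
    (hxs : ‖vert n d x‖ ≤ s * ‖horiz n d x‖) :
    ups n d x ≠ 0 ∧
      ‖vert n d (ups n d x)‖ ≤ s * (1 + s ^ 2) ^ (-(1 : ℝ) / 2) * ‖horiz n d (ups n d x)‖ := by
  have hH : 0 < ‖horiz n d x‖ := horiz_pos hx hxs
  have hx0 : 0 < ‖x‖ := norm_pos_iff.mpr hx
  have hsp : 0 < Real.sqrt (1 + s ^ 2) := Real.sqrt_pos.mpr (by positivity)
  have hsq : Real.sqrt (1 + s ^ 2) ^ 2 = 1 + s ^ 2 := Real.sq_sqrt (by positivity)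
  constructor
  · apply ne_zero_of_horiz_ne
    have : 0 < ‖horiz n d (ups n d x)‖ := by rw [norm_horiz_ups hH]; exact hx0
    exact norm_pos_iff.mp this
  · rw [vert_ups, norm_horiz_ups hH, rpow_half_eq]
    have nsplit := norm_sq_split (n := n) x
    have hv2 : ‖vert n d x‖ ^ 2 ≤ s ^ 2 * ‖horiz n d x‖ ^ 2 := by
      nlinarith [norm_nonneg (vert n d x), norm_nonneg (horiz n d x)]
    have key : ‖vert n d x‖ * Real.sqrt (1 + s ^ 2) ≤ s * ‖x‖ := by
      apply le_of_sq_le_sq' (by positivity) (by positivity)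
      have : (‖vert n d x‖ * Real.sqrt (1 + s ^ 2)) ^ 2
          = ‖vert n d x‖ ^ 2 * (1 + s ^ 2) := by rw [mul_pow, hsq]
      nlinarith
    calc ‖vert n d x‖ = (‖vert n d x‖ * Real.sqrt (1 + s ^ 2)) * (Real.sqrt (1 + s ^ 2))⁻¹ := by
          field_simp
      _ ≤ (s * ‖x‖) * (Real.sqrt (1 + s ^ 2))⁻¹ :=
          mul_le_mul_of_nonneg_right key (by positivity)
      _ = s * (Real.sqrt (1 + s ^ 2))⁻¹ * ‖x‖ := by ring

lemma upsInv_ups {s : ℝ} (hs0 : 0 < s) {x : EuclideanSpace ℝ (Fin d)} (hx : x ≠ 0)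
    (hxs : ‖vert n d x‖ ≤ s * ‖horiz n d x‖) : upsInv n d (ups n d x) = x := by
  have hH : 0 < ‖horiz n d x‖ := horiz_pos hx hxs
  have hx0 : 0 < ‖x‖ := norm_pos_iff.mpr hx
  have nsplit := norm_sq_split (n := n) x
  rw [upsInv, vert_ups, norm_horiz_ups hH, horiz_ups]
  have e1 : 1 - ‖vert n d x‖ ^ 2 / ‖x‖ ^ 2 = (‖horiz n d x‖ / ‖x‖) ^ 2 := by
    rw [div_pow]
    field_simp
    linarith
  rw [e1, Real.sqrt_sq (by positivity), smul_smul]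
  have e2 : ‖horiz n d x‖ / ‖x‖ * (‖x‖ / ‖horiz n d x‖) = 1 := by
    field_simp
  rw [e2, one_smul, horiz_add_vert]

lemma L'_facts {s : ℝ} (hs0 : 0 < s) (hs1 : s < 1) {y : EuclideanSpace ℝ (Fin d)} (hy : y ≠ 0)
    (hy' : ‖vert n d y‖ ≤ s * (1 + s ^ 2) ^ (-(1 : ℝ) / 2) * ‖horiz n d y‖) :
    0 < ‖horiz n d y‖ ∧ (1 + s ^ 2) * ‖vert n d y‖ ^ 2 ≤ s ^ 2 * ‖horiz n d y‖ ^ 2 ∧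
      2 * ‖vert n d y‖ ^ 2 ≤ ‖horiz n d y‖ ^ 2 := by
  have hH : 0 < ‖horiz n d y‖ := horiz_pos hy hy'
  have hsp : 0 < Real.sqrt (1 + s ^ 2) := Real.sqrt_pos.mpr (by positivity)
  have hsq : Real.sqrt (1 + s ^ 2) ^ 2 = 1 + s ^ 2 := Real.sq_sqrt (by positivity)
  rw [rpow_half_eq] at hy'
  have key : ‖vert n d y‖ * Real.sqrt (1 + s ^ 2) ≤ s * ‖horiz n d y‖ := by
    calc ‖vert n d y‖ * Real.sqrt (1 + s ^ 2)
        ≤ (s * (Real.sqrt (1 + s ^ 2))⁻¹ * ‖horiz n d y‖) * Real.sqrt (1 + s ^ 2) :=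
          mul_le_mul_of_nonneg_right hy' hsp.le
      _ = s * ‖horiz n d y‖ := by field_simp
  have k2 : (1 + s ^ 2) * ‖vert n d y‖ ^ 2 ≤ s ^ 2 * ‖horiz n d y‖ ^ 2 := by
    have hk := mul_self_le_mul_self (by positivity) key
    nlinarith [hk, hsq]
  refine ⟨hH, k2, ?_⟩
  have hv2h2 : ‖vert n d y‖ ^ 2 ≤ ‖horiz n d y‖ ^ 2 := by
    nlinarith [k2, sq_nonneg (‖horiz n d y‖), sq_nonneg s]
  have h1s : (0 : ℝ) ≤ 1 - s ^ 2 := by nlinarith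
  have hprod := mul_nonneg h1s (by linarith : (0:ℝ) ≤ ‖horiz n d y‖ ^ 2 - ‖vert n d y‖ ^ 2)
  nlinarith [k2, hprod]

lemma memL_of_upsInv {s : ℝ} (hs0 : 0 < s) (hs1 : s < 1) {y : EuclideanSpace ℝ (Fin d)}
    (hy : y ≠ 0) (hy' : ‖vert n d y‖ ≤ s * (1 + s ^ 2) ^ (-(1 : ℝ) / 2) * ‖horiz n d y‖) :
    upsInv n d y ≠ 0 ∧ ‖vert n d (upsInv n d y)‖ ≤ s * ‖horiz n d (upsInv n d y)‖ := by
  obtain ⟨hH, k2, k3⟩ := L'_facts hs0 hs1 hy hy'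
  set t := Real.sqrt (1 - ‖vert n d y‖ ^ 2 / ‖horiz n d y‖ ^ 2) with ht_def
  have harg : (1 : ℝ) / 2 ≤ 1 - ‖vert n d y‖ ^ 2 / ‖horiz n d y‖ ^ 2 := by
    have : ‖vert n d y‖ ^ 2 / ‖horiz n d y‖ ^ 2 ≤ 1 / 2 := by
      rw [div_le_iff₀ (by positivity)]
      nlinarith
    linarith
  have ht2 : t ^ 2 = 1 - ‖vert n d y‖ ^ 2 / ‖horiz n d y‖ ^ 2 :=
    Real.sq_sqrt (by linarith)
  have htpos : 0 < t := Real.sqrt_pos.mpr (by linarith)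
  have hhy : horiz n d y ≠ 0 := norm_pos_iff.mp hH
  have hHInv : horiz n d (upsInv n d y) = t • horiz n d y := horiz_upsInv y
  have hnormH : ‖horiz n d (upsInv n d y)‖ = t * ‖horiz n d y‖ := by
    rw [hHInv, norm_smul, Real.norm_eq_abs, abs_of_pos htpos]
  constructor
  · apply ne_zero_of_horiz_ne
    rw [hHInv]
    exact smul_ne_zero htpos.ne' hhy
  · rw [vert_upsInv, hnormH]
    apply le_of_sq_le_sq' (norm_nonneg _) (by positivity)
    have expand : (s * (t * ‖horiz n d y‖)) ^ 2
        = s ^ 2 * (‖horiz n d y‖ ^ 2 - ‖vert n d y‖ ^ 2) := by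
      rw [mul_pow, mul_pow, ht2]
      field_simp
    rw [expand]
    nlinarith

lemma ups_upsInv {s : ℝ} (hs0 : 0 < s) (hs1 : s < 1) {y : EuclideanSpace ℝ (Fin d)}
    (hy : y ≠ 0) (hy' : ‖vert n d y‖ ≤ s * (1 + s ^ 2) ^ (-(1 : ℝ) / 2) * ‖horiz n d y‖) :
    ups n d (upsInv n d y) = y := by
  obtain ⟨hH, k2, k3⟩ := L'_facts hs0 hs1 hy hy'
  set t := Real.sqrt (1 - ‖vert n d y‖ ^ 2 / ‖horiz n d y‖ ^ 2) with ht_def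
  have harg : (1 : ℝ) / 2 ≤ 1 - ‖vert n d y‖ ^ 2 / ‖horiz n d y‖ ^ 2 := by
    have : ‖vert n d y‖ ^ 2 / ‖horiz n d y‖ ^ 2 ≤ 1 / 2 := by
      rw [div_le_iff₀ (by positivity)]
      nlinarith
    linarith
  have ht2 : t ^ 2 = 1 - ‖vert n d y‖ ^ 2 / ‖horiz n d y‖ ^ 2 :=
    Real.sq_sqrt (by linarith)
  have htpos : 0 < t := Real.sqrt_pos.mpr (by linarith)
  have hHInv : horiz n d (upsInv n d y) = t • horiz n d y := horiz_upsInv y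
  have hVInv : vert n d (upsInv n d y) = vert n d y := vert_upsInv y
  have hnormH : ‖horiz n d (upsInv n d y)‖ = t * ‖horiz n d y‖ := by
    rw [hHInv, norm_smul, Real.norm_eq_abs, abs_of_pos htpos]
  have hnorm : ‖upsInv n d y‖ = ‖horiz n d y‖ := by
    have hsq : ‖upsInv n d y‖ ^ 2 = ‖horiz n d y‖ ^ 2 := by
      rw [norm_sq_split (n := n) (upsInv n d y), hnormH, hVInv, mul_pow, ht2]
      field_simp
      ring
    have := congrArg Real.sqrt hsq
    rwa [Real.sqrt_sq (norm_nonneg _), Real.sqrt_sq (norm_nonneg _)] at this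
  rw [ups, hnorm, hnormH, hHInv, hVInv, smul_smul]
  have e2 : ‖horiz n d y‖ / (t * ‖horiz n d y‖) * t = 1 := by
    field_simp
  rw [e2, one_smul, horiz_add_vert]

lemma norm_horiz_sub_le (x y : EuclideanSpace ℝ (Fin d)) :
    ‖horiz n d x - horiz n d y‖ ≤ ‖x - y‖ := by
  rw [← horiz_sub]; exact norm_horiz_le _

lemma norm_vert_sub_le (x y : EuclideanSpace ℝ (Fin d)) :
    ‖vert n d x - vert n d y‖ ≤ ‖x - y‖ := by
  rw [← vert_sub]; exact norm_vert_le _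

lemma lip_forward {s : ℝ} (hs0 : 0 < s) (hs1 : s < 1) {x y : EuclideanSpace ℝ (Fin d)}
    (hx : x ≠ 0) (hxs : ‖vert n d x‖ ≤ s * ‖horiz n d x‖)
    (hy : y ≠ 0) (hys : ‖vert n d y‖ ≤ s * ‖horiz n d y‖) :
    ‖ups n d x - ups n d y‖ ≤ 6 * ‖x - y‖ := by
  have hHx : 0 < ‖horiz n d x‖ := horiz_pos hx hxs
  have hHy : 0 < ‖horiz n d y‖ := horiz_pos hy hys
  have nsplitx := norm_sq_split (n := n) x
  have hx2 : ‖x‖ ≤ 2 * ‖horiz n d x‖ := by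
    apply le_of_sq_le_sq' (norm_nonneg _) (by positivity)
    have hv2 : ‖vert n d x‖ ^ 2 ≤ s ^ 2 * ‖horiz n d x‖ ^ 2 := by
      nlinarith [norm_nonneg (vert n d x), hs0]
    nlinarith [hv2, sq_nonneg (‖horiz n d x‖), mul_self_lt_mul_self hs0.le hs1]
  have hxH : ‖horiz n d x‖ ≤ ‖x‖ := norm_horiz_le x
  set a := ‖x‖ / ‖horiz n d x‖ with ha_def
  set b := ‖y‖ / ‖horiz n d y‖ with hb_def
  have ha_nonneg : 0 ≤ a := by positivity
  have ha_le : a ≤ 2 := by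
    rw [ha_def, div_le_iff₀ hHx]; linarith
  have decomp : ups n d x - ups n d y
      = a • (horiz n d x - horiz n d y) + (a - b) • horiz n d y
        + (vert n d x - vert n d y) := by
    rw [ups, ups, ← ha_def, ← hb_def]
    module
  have e1 : |‖horiz n d y‖ - ‖horiz n d x‖| ≤ ‖x - y‖ := by
    rw [abs_sub_comm]
    calc |‖horiz n d x‖ - ‖horiz n d y‖| ≤ ‖horiz n d x - horiz n d y‖ :=
          abs_norm_sub_norm_le _ _
      _ ≤ ‖x - y‖ := norm_horiz_sub_le x y
  have e2 : |‖x‖ - ‖y‖| ≤ ‖x - y‖ := abs_norm_sub_norm_le x y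
  have habs : |‖x‖ * ‖horiz n d y‖ - ‖y‖ * ‖horiz n d x‖| ≤ 3 * (‖horiz n d x‖ * ‖x - y‖) := by
    calc |‖x‖ * ‖horiz n d y‖ - ‖y‖ * ‖horiz n d x‖|
        = |‖x‖ * (‖horiz n d y‖ - ‖horiz n d x‖) + ‖horiz n d x‖ * (‖x‖ - ‖y‖)| := by
          ring_nf
      _ ≤ |‖x‖ * (‖horiz n d y‖ - ‖horiz n d x‖)| + |‖horiz n d x‖ * (‖x‖ - ‖y‖)| :=
          abs_add_le _ _
      _ = ‖x‖ * |‖horiz n d y‖ - ‖horiz n d x‖| + ‖horiz n d x‖ * |‖x‖ - ‖y‖| := by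
          rw [abs_mul, abs_mul, abs_of_nonneg (norm_nonneg x),
            abs_of_nonneg (norm_nonneg (horiz n d x))]
      _ ≤ (2 * ‖horiz n d x‖) * ‖x - y‖ + ‖horiz n d x‖ * ‖x - y‖ := by
          have t1 : ‖x‖ * |‖horiz n d y‖ - ‖horiz n d x‖| ≤ (2 * ‖horiz n d x‖) * ‖x - y‖ :=
            mul_le_mul hx2 e1 (abs_nonneg _) (by positivity)
          have t2 : ‖horiz n d x‖ * |‖x‖ - ‖y‖| ≤ ‖horiz n d x‖ * ‖x - y‖ :=
            mul_le_mul_of_nonneg_left e2 hHx.le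
          linarith
      _ = 3 * (‖horiz n d x‖ * ‖x - y‖) := by ring
  have hab : |a - b| * ‖horiz n d y‖ ≤ 3 * ‖x - y‖ := by
    have hrepr : a - b = (‖x‖ * ‖horiz n d y‖ - ‖y‖ * ‖horiz n d x‖)
        / (‖horiz n d x‖ * ‖horiz n d y‖) := by
      rw [ha_def, hb_def]
      field_simp
    rw [hrepr, abs_div, abs_of_pos (mul_pos hHx hHy)]
    rw [div_mul_eq_mul_div, div_le_iff₀ (mul_pos hHx hHy)]
    calc |‖x‖ * ‖horiz n d y‖ - ‖y‖ * ‖horiz n d x‖| * ‖horiz n d y‖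
        ≤ (3 * (‖horiz n d x‖ * ‖x - y‖)) * ‖horiz n d y‖ :=
          mul_le_mul_of_nonneg_right habs (norm_nonneg _)
      _ = 3 * ‖x - y‖ * (‖horiz n d x‖ * ‖horiz n d y‖) := by ring
  calc ‖ups n d x - ups n d y‖
      ≤ ‖a • (horiz n d x - horiz n d y)‖ + ‖(a - b) • horiz n d y‖
        + ‖vert n d x - vert n d y‖ := by rw [decomp]; exact norm_add₃_le
    _ ≤ 2 * ‖x - y‖ + 3 * ‖x - y‖ + ‖x - y‖ := by
        have t1 : ‖a • (horiz n d x - horiz n d y)‖ ≤ 2 * ‖x - y‖ := by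
          rw [norm_smul, Real.norm_eq_abs, abs_of_nonneg ha_nonneg]
          exact mul_le_mul ha_le (norm_horiz_sub_le x y) (norm_nonneg _) (by norm_num)
        have t2 : ‖(a - b) • horiz n d y‖ ≤ 3 * ‖x - y‖ := by
          rw [norm_smul, Real.norm_eq_abs]
          exact hab
        have t3 : ‖vert n d x - vert n d y‖ ≤ ‖x - y‖ := norm_vert_sub_le x y
        linarith
    _ = 6 * ‖x - y‖ := by ring

lemma sqrt_sub_lip {h1 v1 h2 v2 D : ℝ} (hh1 : 0 ≤ h1) (hv1 : 0 ≤ v1) (hv2 : 0 ≤ v2)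
    (hD : 0 ≤ D) (hvh1 : v1 ≤ h1) (hlb : h2 / 2 ≤ Real.sqrt (h2 ^ 2 - v2 ^ 2))
    (hvh2 : v2 ≤ h2)
    (e1 : |h1 - h2| ≤ D) (e2 : |v1 - v2| ≤ D) :
    Real.sqrt (h1 ^ 2 - v1 ^ 2) ≤ Real.sqrt (h2 ^ 2 - v2 ^ 2) + 4 * D := by
  set a2 := Real.sqrt (h2 ^ 2 - v2 ^ 2) with ha2_def
  have ha2nn : 0 ≤ a2 := Real.sqrt_nonneg _
  have ha2sq : a2 ^ 2 = h2 ^ 2 - v2 ^ 2 := Real.sq_sqrt (by nlinarith)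
  have h1b : h1 ≤ h2 + D := by
    rcases abs_le.mp e1 with ⟨l, r⟩; linarith
  have v2b : v2 ≤ v1 + D := by
    rcases abs_le.mp e2 with ⟨l, r⟩; linarith
  have key : h1 ^ 2 - v1 ^ 2 ≤ (a2 + 4 * D) ^ 2 := by
    nlinarith [h1b, v2b, hlb, ha2sq, hD, hh1, hv1, hv2, hvh1, sq_nonneg D,
      mul_nonneg hD hD, mul_nonneg ha2nn hD]
  calc Real.sqrt (h1 ^ 2 - v1 ^ 2) ≤ Real.sqrt ((a2 + 4 * D) ^ 2) := Real.sqrt_le_sqrt key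
    _ = a2 + 4 * D := Real.sqrt_sq (by positivity)

set_option maxHeartbeats 2000000 in
lemma lip_inv {s : ℝ} (hs0 : 0 < s) (hs1 : s < 1) {y z : EuclideanSpace ℝ (Fin d)}
    (hy : y ≠ 0) (hy' : ‖vert n d y‖ ≤ s * (1 + s ^ 2) ^ (-(1 : ℝ) / 2) * ‖horiz n d y‖)
    (hz : z ≠ 0) (hz' : ‖vert n d z‖ ≤ s * (1 + s ^ 2) ^ (-(1 : ℝ) / 2) * ‖horiz n d z‖) :
    ‖upsInv n d y - upsInv n d z‖ ≤ 7 * ‖y - z‖ := by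
  obtain ⟨hHy, ky2, ky3⟩ := L'_facts (n := n) (d := d) hs0 hs1 hy hy'
  obtain ⟨hHz, kz2, kz3⟩ := L'_facts (n := n) (d := d) hs0 hs1 hz hz'
  set D := ‖y - z‖ with hD_def
  have hD : 0 ≤ D := norm_nonneg _
  set Hy := ‖horiz n d y‖
  set Vy := ‖vert n d y‖
  set Hz := ‖horiz n d z‖
  set Vz := ‖vert n d z‖
  have hVy : 0 ≤ Vy := norm_nonneg _
  have hVz : 0 ≤ Vz := norm_nonneg _
  have hvhy : Vy ≤ Hy := by nlinarith
  have hvhz : Vz ≤ Hz := by nlinarith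
  set ay := Real.sqrt (Hy ^ 2 - Vy ^ 2) with hay_def
  set az := Real.sqrt (Hz ^ 2 - Vz ^ 2) with haz_def
  have hay_nn : 0 ≤ ay := Real.sqrt_nonneg _
  have haz_nn : 0 ≤ az := Real.sqrt_nonneg _
  have hay_sq : ay ^ 2 = Hy ^ 2 - Vy ^ 2 := Real.sq_sqrt (by nlinarith)
  have haz_sq : az ^ 2 = Hz ^ 2 - Vz ^ 2 := Real.sq_sqrt (by nlinarith)
  have hay_lb : Hy / 2 ≤ ay :=
    le_of_sq_le_sq' (by positivity) hay_nn (by rw [hay_sq]; nlinarith)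
  have haz_lb : Hz / 2 ≤ az :=
    le_of_sq_le_sq' (by positivity) haz_nn (by rw [haz_sq]; nlinarith)
  have hay_ub : ay ≤ Hy :=
    le_of_sq_le_sq' hay_nn hHy.le (by rw [hay_sq]; nlinarith)
  have hay_pos : 0 < ay := lt_of_lt_of_le (by positivity) hay_lb
  have haz_pos : 0 < az := lt_of_lt_of_le (by positivity) haz_lb
  have e1 : |Hy - Hz| ≤ D := by
    calc |Hy - Hz| ≤ ‖horiz n d y - horiz n d z‖ := abs_norm_sub_norm_le _ _
      _ ≤ D := norm_horiz_sub_le y z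
  have e2 : |Vy - Vz| ≤ D := by
    calc |Vy - Vz| ≤ ‖vert n d y - vert n d z‖ := abs_norm_sub_norm_le _ _
      _ ≤ D := norm_vert_sub_le y z
  have aLip : |ay - az| ≤ 4 * D := by
    rw [abs_sub_le_iff]
    constructor
    · have := sqrt_sub_lip hHy.le hVy hVz hD hvhy haz_lb hvhz e1 e2
      rw [← hay_def, ← haz_def] at this
      linarith
    · have e1' : |Hz - Hy| ≤ D := by rw [abs_sub_comm]; exact e1
      have e2' : |Vz - Vy| ≤ D := by rw [abs_sub_comm]; exact e2
      have := sqrt_sub_lip hHz.le hVz hVy hD hvhz hay_lb hvhy e1' e2'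
      rw [← hay_def, ← haz_def] at this
      linarith
  -- express the sqrt coefficients as a/H
  have ty_eq : Real.sqrt (1 - Vy ^ 2 / Hy ^ 2) = ay / Hy := by
    have harg : 1 - Vy ^ 2 / Hy ^ 2 = (Hy ^ 2 - Vy ^ 2) / Hy ^ 2 := by
      field_simp
    rw [harg, Real.sqrt_div (by nlinarith) (Hy ^ 2), Real.sqrt_sq hHy.le]
  have tz_eq : Real.sqrt (1 - Vz ^ 2 / Hz ^ 2) = az / Hz := by
    have harg : 1 - Vz ^ 2 / Hz ^ 2 = (Hz ^ 2 - Vz ^ 2) / Hz ^ 2 := by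
      field_simp
    rw [harg, Real.sqrt_div (by nlinarith) (Hz ^ 2), Real.sqrt_sq hHz.le]
  have decomp : upsInv n d y - upsInv n d z
      = (ay / Hy) • (horiz n d y - horiz n d z) + (ay / Hy - az / Hz) • horiz n d z
        + (vert n d y - vert n d z) := by
    rw [upsInv, upsInv, ty_eq, tz_eq]
    module
  have ty_le : ay / Hy ≤ 1 := by
    rw [div_le_one hHy]; exact hay_ub
  have ty_nn : 0 ≤ ay / Hy := by positivity
  have tdiff : |ay / Hy - az / Hz| * Hz ≤ 5 * D := by
    have hrepr : ay / Hy - az / Hz = (ay * Hz - az * Hy) / (Hy * Hz) := by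
      field_simp
    have hnum : |ay * Hz - az * Hy| ≤ 5 * (Hy * D) := by
      calc |ay * Hz - az * Hy| = |ay * (Hz - Hy) + Hy * (ay - az)| := by ring_nf
        _ ≤ |ay * (Hz - Hy)| + |Hy * (ay - az)| := abs_add_le _ _
        _ = ay * |Hz - Hy| + Hy * |ay - az| := by
            rw [abs_mul, abs_mul, abs_of_nonneg hay_nn, abs_of_nonneg hHy.le]
        _ ≤ Hy * D + Hy * (4 * D) := by
            have t1 : ay * |Hz - Hy| ≤ Hy * D := by
              rw [abs_sub_comm]
              exact mul_le_mul hay_ub e1 (abs_nonneg _) hHy.le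
            have t2 : Hy * |ay - az| ≤ Hy * (4 * D) :=
              mul_le_mul_of_nonneg_left aLip hHy.le
            linarith
        _ = 5 * (Hy * D) := by ring
    rw [hrepr, abs_div, abs_of_pos (mul_pos hHy hHz), div_mul_eq_mul_div,
      div_le_iff₀ (mul_pos hHy hHz)]
    calc |ay * Hz - az * Hy| * Hz ≤ (5 * (Hy * D)) * Hz :=
          mul_le_mul_of_nonneg_right hnum hHz.le
      _ = 5 * D * (Hy * Hz) := by ring
  calc ‖upsInv n d y - upsInv n d z‖
      ≤ ‖(ay / Hy) • (horiz n d y - horiz n d z)‖ + ‖(ay / Hy - az / Hz) • horiz n d z‖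
        + ‖vert n d y - vert n d z‖ := by rw [decomp]; exact norm_add₃_le
    _ ≤ 1 * D + 5 * D + D := by
        have t1 : ‖(ay / Hy) • (horiz n d y - horiz n d z)‖ ≤ 1 * D := by
          rw [norm_smul, Real.norm_eq_abs, abs_of_nonneg ty_nn]
          exact mul_le_mul ty_le (norm_horiz_sub_le y z) (norm_nonneg _) (by norm_num)
        have t2 : ‖(ay / Hy - az / Hz) • horiz n d z‖ ≤ 5 * D := by
          rw [norm_smul, Real.norm_eq_abs]
          exact tdiff
        have t3 : ‖vert n d y - vert n d z‖ ≤ D := norm_vert_sub_le y z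
        linarith
    _ ≤ 7 * D := by linarith

/-- For `1 ≤ n < d` and `0 < s < 1`, the map `Υ` is a bilipschitz
homeomorphism from the cone `L = {x ≠ 0 : |x_V| ≤ s|x_H|}` onto the cone
`L' = {x ≠ 0 : |x_V| ≤ s(1+s²)^{-1/2}|x_H|}`, with inverse `Υ⁻¹` as above, the bilipschitz
constant depending only on `n`, `d` and `s`. -/
theorem stmt5 (n d : ℕ) (hn : 1 ≤ n) (hnd : n < d) (s : ℝ) (hs0 : 0 < s) (hs1 : s < 1) :
    ∃ C > 0,
      (ups n d '' {x : EuclideanSpace ℝ (Fin d) | x ≠ 0 ∧ ‖vert n d x‖ ≤ s * ‖horiz n d x‖}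
        = {x : EuclideanSpace ℝ (Fin d) |
            x ≠ 0 ∧ ‖vert n d x‖ ≤ s * (1 + s ^ 2) ^ (-(1 : ℝ) / 2) * ‖horiz n d x‖}) ∧
      (∀ x : EuclideanSpace ℝ (Fin d), x ≠ 0 → ‖vert n d x‖ ≤ s * ‖horiz n d x‖ →
        upsInv n d (ups n d x) = x) ∧
      (∀ y : EuclideanSpace ℝ (Fin d), y ≠ 0 →
        ‖vert n d y‖ ≤ s * (1 + s ^ 2) ^ (-(1 : ℝ) / 2) * ‖horiz n d y‖ →
        ups n d (upsInv n d y) = y) ∧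
      (∀ x y : EuclideanSpace ℝ (Fin d), x ≠ 0 → ‖vert n d x‖ ≤ s * ‖horiz n d x‖ →
        y ≠ 0 → ‖vert n d y‖ ≤ s * ‖horiz n d y‖ →
        ‖ups n d x - ups n d y‖ ≤ C * ‖x - y‖ ∧ ‖x - y‖ ≤ C * ‖ups n d x - ups n d y‖) := by
  refine ⟨7, by norm_num, ?_, ?_, ?_, ?_⟩
  · ext z
    simp only [Set.mem_image, Set.mem_setOf_eq]
    constructor
    · rintro ⟨x, ⟨hx, hxs⟩, rfl⟩
      exact memL' hs0 hx hxs
    · rintro ⟨hz, hz'⟩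
      obtain ⟨h1, h2⟩ := memL_of_upsInv hs0 hs1 hz hz'
      exact ⟨upsInv n d z, ⟨h1, h2⟩, ups_upsInv hs0 hs1 hz hz'⟩
  · intro x hx hxs
    exact upsInv_ups hs0 hx hxs
  · intro y hy hy'
    exact ups_upsInv hs0 hs1 hy hy'
  · intro x y hx hxs hy hys
    constructor
    · have h6 := lip_forward hs0 hs1 hx hxs hy hys
      have hD : 0 ≤ ‖x - y‖ := norm_nonneg _
      linarith
    · obtain ⟨hx1, hx2⟩ := memL' hs0 hx hxs
      obtain ⟨hy1, hy2⟩ := memL' hs0 hy hys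
      have h7 := lip_inv hs0 hs1 hx1 hx2 hy1 hy2
      rwa [upsInv_ups hs0 hx hxs, upsInv_ups hs0 hy hys] at h7
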